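/- arXiv:2506.13077 — 2 statements merged into one kernel-verified Lean document; each statement's English description precedes it below -/
import Mathlib

section
/- Let N ≥ 6 and define, for p ∈ (N/(N-2), (N+2)/(N-2)] with q determined by 1/(p+1) + 1/(q+1) = (N-2)/N, the function σ₃(p) := N - 2N/(p+1) + (1 - N/((p+1)(N-2)))·(N/(p+1) - 2 - N/((p+1)(N-2))) - N/(2(q+1)). Then σ₃ is strictly increasing on this interval and σ₃(N/(N-2)) = (3N-2)/(2(N-1)²) > 0; hence σ₃(p) > 0 for all p in (N/(N-2), (N+2)/(N-2)]. -/
/-- The function σ₃ from the paper; here `N/(2(q+1)) = (N - 2 - N/(p+1))/2` by the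
criticality relation. -/
noncomputable def sigma3 (N p : ℝ) : ℝ :=
  N - 2 * N / (p + 1) +
    (1 - N / ((p + 1) * (N - 2))) * (N / (p + 1) - 2 - N / ((p + 1) * (N - 2))) -
    (N - 2 - N / (p + 1)) / 2

lemma sigma3_eq (N p : ℝ) (h1 : p + 1 ≠ 0) (h2 : N - 2 ≠ 0) :
    sigma3 N p = ((N - 2) ^ 3 * (p + 1) ^ 2 + N * (4 - N) * (N - 2) * (p + 1)
      + 2 * N ^ 2 * (3 - N)) / (2 * (N - 2) ^ 2 * (p + 1) ^ 2) := by
  unfold sigma3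
  field_simp
  ring

theorem stmt_6 (N : ℕ) (hN : 6 ≤ N) :
    StrictMonoOn (sigma3 N) (Set.Icc ((N : ℝ) / (N - 2)) (((N : ℝ) + 2) / (N - 2))) ∧
    sigma3 N ((N : ℝ) / (N - 2)) = (3 * N - 2) / (2 * ((N : ℝ) - 1) ^ 2) ∧
    0 < (3 * (N : ℝ) - 2) / (2 * ((N : ℝ) - 1) ^ 2) ∧
    ∀ p ∈ Set.Ioc ((N : ℝ) / (N - 2)) (((N : ℝ) + 2) / (N - 2)), 0 < sigma3 N p := by
  have hNr : (6 : ℝ) ≤ (N : ℝ) := by exact_mod_cast hN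
  have hN2 : (0 : ℝ) < (N : ℝ) - 2 := by linarith
  have hN2' : (N : ℝ) - 2 ≠ 0 := ne_of_gt hN2
  have hlow : (0 : ℝ) < (N : ℝ) / ((N : ℝ) - 2) := by positivity
  have hpos : ∀ x : ℝ, (N : ℝ) / ((N : ℝ) - 2) ≤ x → 0 < x + 1 := by
    intro x hx; linarith
  have hmono : StrictMonoOn (sigma3 N)
      (Set.Icc ((N : ℝ) / (N - 2)) (((N : ℝ) + 2) / (N - 2))) := by
    intro x hx y hy hxy
    have hx1 : 0 < x + 1 := hpos x hx.1
    have hy1 : 0 < y + 1 := hpos y hy.1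
    rw [sigma3_eq (N : ℝ) x (ne_of_gt hx1) hN2', sigma3_eq (N : ℝ) y (ne_of_gt hy1) hN2']
    rw [div_lt_div_iff₀ (by positivity) (by positivity)]
    have hkey : (((N : ℝ) - 2) ^ 3 * (y + 1) ^ 2 + (N : ℝ) * (4 - (N : ℝ)) * ((N : ℝ) - 2) * (y + 1)
          + 2 * (N : ℝ) ^ 2 * (3 - (N : ℝ))) * (2 * ((N : ℝ) - 2) ^ 2 * (x + 1) ^ 2)
        - (((N : ℝ) - 2) ^ 3 * (x + 1) ^ 2 + (N : ℝ) * (4 - (N : ℝ)) * ((N : ℝ) - 2) * (x + 1)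
          + 2 * (N : ℝ) ^ 2 * (3 - (N : ℝ))) * (2 * ((N : ℝ) - 2) ^ 2 * (y + 1) ^ 2)
        = (y - x) * (2 * ((N : ℝ) - 2) ^ 2) *
          ((N : ℝ) * ((N : ℝ) - 4) * ((N : ℝ) - 2) * (x + 1) * (y + 1) +
            2 * (N : ℝ) ^ 2 * ((N : ℝ) - 3) * ((x + 1) + (y + 1))) := by
      ring
    have hrhs : 0 < (y - x) * (2 * ((N : ℝ) - 2) ^ 2) *
          ((N : ℝ) * ((N : ℝ) - 4) * ((N : ℝ) - 2) * (x + 1) * (y + 1) +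
            2 * (N : ℝ) ^ 2 * ((N : ℝ) - 3) * ((x + 1) + (y + 1))) := by
      have h0 : (0:ℝ) < (N : ℝ) := by linarith
      have h1 : 0 < y - x := by linarith
      have h2 : 0 < (N : ℝ) * ((N : ℝ) - 4) * ((N : ℝ) - 2) * (x + 1) * (y + 1) := by
        have h4 : (0:ℝ) < (N : ℝ) - 4 := by linarith
        positivity
      have h3 : 0 < 2 * (N : ℝ) ^ 2 * ((N : ℝ) - 3) * ((x + 1) + (y + 1)) := by
        have h4 : (0:ℝ) < (N : ℝ) - 3 := by linarith
        have h5 : (0:ℝ) < (x + 1) + (y + 1) := by linarith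
        positivity
      have := mul_pos (mul_pos h1 (by positivity : (0:ℝ) < 2 * ((N : ℝ) - 2) ^ 2))
        (add_pos h2 h3)
      linarith
    linarith [hkey, hrhs]
  have hval : sigma3 N ((N : ℝ) / (N - 2)) = (3 * N - 2) / (2 * ((N : ℝ) - 1) ^ 2) := by
    have hp1 : (0:ℝ) < (N : ℝ) / ((N : ℝ) - 2) + 1 := hpos _ le_rfl
    rw [sigma3_eq (N : ℝ) _ (ne_of_gt hp1) hN2']
    have hq : (N : ℝ) / ((N : ℝ) - 2) + 1 = (2 * (N : ℝ) - 2) / ((N : ℝ) - 2) := by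
      field_simp; ring
    rw [hq]
    have hN1 : (N : ℝ) - 1 ≠ 0 := by intro h; nlinarith
    have h2N2 : 2 * (N : ℝ) - 2 ≠ 0 := by intro h; nlinarith
    field_simp
    ring
  have hposval : 0 < (3 * (N : ℝ) - 2) / (2 * ((N : ℝ) - 1) ^ 2) := by
    have h1 : (0:ℝ) < 3 * (N : ℝ) - 2 := by linarith
    have h2 : (0:ℝ) < (N : ℝ) - 1 := by linarith
    positivity
  refine ⟨hmono, hval, hposval, ?_⟩
  intro p hp
  have hle : (N : ℝ) / ((N : ℝ) - 2) ≤ ((N : ℝ) + 2) / ((N : ℝ) - 2) := by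
    gcongr <;> linarith
  have hmem1 : (N : ℝ) / ((N : ℝ) - 2) ∈
      Set.Icc ((N : ℝ) / (N - 2)) (((N : ℝ) + 2) / (N - 2)) := ⟨le_refl _, hle⟩
  have hmem2 : p ∈ Set.Icc ((N : ℝ) / (N - 2)) (((N : ℝ) + 2) / (N - 2)) :=
    ⟨le_of_lt hp.1, hp.2⟩
  have h := hmono hmem1 hmem2 hp.1
  rw [hval] at h
  linarith
end

section
/- Let α, β > 0, 0 < σ ≤ β, and x̃₁ ≠ x̃₂ in ℝ^N. Then there exists a constant C > 0 (depending only on α, β, σ) such that for all y ∈ ℝ^N with |y - x̃₂| ≥ |x̃₁ - x̃₂|/2, one has (1+|y-x̃₁|)^{-α}(1+|y-x̃₂|)^{-β} ≤ C |x̃₁-x̃₂|^{-σ} [ (1+|y-x̃₁|)^{-(α+β-σ)} + (1+|y-x̃₂|)^{-(α+β-σ)} ]. -/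
lemma aux17 (α β σ a b d : ℝ) (hα : 0 < α) (hβ : 0 < β) (hσ0 : 0 < σ) (hσβ : σ ≤ β)
    (ha : 0 ≤ a) (hd : 0 < d) (hb : d / 2 ≤ b) :
    (1 + a) ^ (-α) * (1 + b) ^ (-β) ≤
      (2:ℝ) ^ σ * d ^ (-σ) * ((1 + a) ^ (-(α + β - σ)) + (1 + b) ^ (-(α + β - σ))) := by
  have hb0 : 0 < b := lt_of_lt_of_le (by linarith) hb
  have h1a : (0:ℝ) < 1 + a := by linarith
  have h1b : (0:ℝ) < 1 + b := by linarith
  have hsplit : (1 + b) ^ (-β) = (1 + b) ^ (-(β - σ)) * (1 + b) ^ (-σ) := by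
    rw [← Real.rpow_add h1b]; ring_nf
  have hstep1 : (1 + b) ^ (-σ) ≤ (2:ℝ) ^ σ * d ^ (-σ) := by
    have h1 : (1 + b) ^ (-σ) ≤ (d/2) ^ (-σ) :=
      Real.rpow_le_rpow_of_nonpos (by linarith) (by linarith) (by linarith)
    have h2 : (d/2 : ℝ) ^ (-σ) = (2:ℝ) ^ σ * d ^ (-σ) := by
      rw [Real.div_rpow hd.le (by norm_num), Real.rpow_neg hd.le,
        Real.rpow_neg (by norm_num : (0:ℝ) ≤ 2)]
      have h2σ : (0:ℝ) < (2:ℝ) ^ σ := Real.rpow_pos_of_pos (by norm_num) σ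
      field_simp
    rw [← h2]; exact h1
  have hkey : (1 + a) ^ (-α) * (1 + b) ^ (-(β - σ)) ≤
      (1 + a) ^ (-(α + β - σ)) + (1 + b) ^ (-(α + β - σ)) := by
    rcases le_total a b with h | h
    · have h3 : (1 + b) ^ (-(β - σ)) ≤ (1 + a) ^ (-(β - σ)) :=
        Real.rpow_le_rpow_of_nonpos h1a (by linarith) (by linarith)
      calc (1 + a) ^ (-α) * (1 + b) ^ (-(β - σ))
          ≤ (1 + a) ^ (-α) * (1 + a) ^ (-(β - σ)) := by
            exact mul_le_mul_of_nonneg_left h3 (Real.rpow_nonneg h1a.le _)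
        _ = (1 + a) ^ (-(α + β - σ)) := by
            rw [← Real.rpow_add h1a]; ring_nf
        _ ≤ _ := le_add_of_nonneg_right (Real.rpow_nonneg h1b.le _)
    · have h3 : (1 + a) ^ (-α) ≤ (1 + b) ^ (-α) :=
        Real.rpow_le_rpow_of_nonpos h1b (by linarith) (by linarith)
      calc (1 + a) ^ (-α) * (1 + b) ^ (-(β - σ))
          ≤ (1 + b) ^ (-α) * (1 + b) ^ (-(β - σ)) := by
            exact mul_le_mul_of_nonneg_right h3 (Real.rpow_nonneg h1b.le _)
        _ = (1 + b) ^ (-(α + β - σ)) := by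
            rw [← Real.rpow_add h1b]; ring_nf
        _ ≤ _ := le_add_of_nonneg_left (Real.rpow_nonneg h1a.le _)
  have hpos : (0:ℝ) ≤ (1 + a) ^ (-α) * (1 + b) ^ (-(β - σ)) := by positivity
  calc (1 + a) ^ (-α) * (1 + b) ^ (-β)
      = ((1 + a) ^ (-α) * (1 + b) ^ (-(β - σ))) * (1 + b) ^ (-σ) := by rw [hsplit]; ring
    _ ≤ ((1 + a) ^ (-α) * (1 + b) ^ (-(β - σ))) * ((2:ℝ) ^ σ * d ^ (-σ)) :=
        mul_le_mul_of_nonneg_left hstep1 hpos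
    _ ≤ ((1 + a) ^ (-(α + β - σ)) + (1 + b) ^ (-(α + β - σ))) * ((2:ℝ) ^ σ * d ^ (-σ)) :=
        mul_le_mul_of_nonneg_right hkey (by positivity)
    _ = _ := by ring

theorem stmt_17 (N : ℕ) (α β σ : ℝ) (hα : 0 < α) (hβ : 0 < β) (hσ0 : 0 < σ) (hσβ : σ ≤ β) :
    ∃ C > 0, ∀ x₁ x₂ : EuclideanSpace ℝ (Fin N), x₁ ≠ x₂ →
      ∀ y : EuclideanSpace ℝ (Fin N), ‖x₁ - x₂‖ / 2 ≤ ‖y - x₂‖ →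
        (1 + ‖y - x₁‖) ^ (-α) * (1 + ‖y - x₂‖) ^ (-β) ≤
          C * ‖x₁ - x₂‖ ^ (-σ) *
            ((1 + ‖y - x₁‖) ^ (-(α + β - σ)) + (1 + ‖y - x₂‖) ^ (-(α + β - σ))) := by
  refine ⟨(2:ℝ) ^ σ, Real.rpow_pos_of_pos (by norm_num) σ, ?_⟩
  intro x₁ x₂ hne y hy
  have hd : 0 < ‖x₁ - x₂‖ := norm_pos_iff.mpr (sub_ne_zero.mpr hne)
  exact aux17 α β σ _ _ _ hα hβ hσ0 hσβ (norm_nonneg _) hd hy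
end
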